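/- Let X be a quandle, let (x₀, y₀) ∈ X × X, and let E ⊆ X × X be the equivalence class of (x₀, y₀) under the relation ≈ defining X ⊗ X. Then for any ε, δ ∈ {+,−}, the equivalence class of (x₀^ε, y₀^δ) in D(X) × D(X) under the relation defining D(X) ⊗ D(X) equals E^{ε,δ} = {(x^ε, y^δ) : (x, y) ∈ E}. -/

import Mathlib

/-- A quandle: a set with two binary operations `op` (`∗`) and `inv` (`∗̄`)
satisfying (Q1), (Q2), (Q3). -/
structure QuandleStr (X : Type) where
  op : X → X → X
  inv : X → X → X
  q1 : ∀ x, op x x = x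
  q2a : ∀ x y, inv (op x y) y = x
  q2b : ∀ x y, op (inv x y) y = x
  q3 : ∀ x y z, op (op x y) z = op (op x z) (op y z)

namespace QuandleStr

variable {X Y : Type} (Q : QuandleStr X)

lemma inv_self (x : X) : Q.inv x x = x := by
  have h := Q.q2a x x
  rwa [Q.q1] at h

lemma op_right_cancel {a b : X} (z : X) (h : Q.op a z = Q.op b z) : a = b := by
  have h2 := congrArg (fun t => Q.inv t z) h
  simpa [Q.q2a] using h2

lemma distA (x y z : X) : Q.inv (Q.op x y) z = Q.op (Q.inv x z) (Q.inv y z) := by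
  apply Q.op_right_cancel z
  rw [Q.q2b, Q.q3, Q.q2b, Q.q2b]

lemma distB (x y z : X) : Q.op (Q.inv x y) z = Q.inv (Q.op x z) (Q.op y z) := by
  have h : Q.op (Q.op (Q.inv x y) y) z = Q.op (Q.op (Q.inv x y) z) (Q.op y z) := Q.q3 _ _ _
  rw [Q.q2b] at h
  have h2 := congrArg (fun t => Q.inv t (Q.op y z)) h
  simpa [Q.q2a] using h2.symm

lemma distD (x y z : X) : Q.inv (Q.inv x y) z = Q.inv (Q.inv x z) (Q.inv y z) := by
  apply Q.op_right_cancel z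
  rw [Q.q2b, Q.distB, Q.q2b, Q.q2b]

/-- One step of the relation generating the tensor product:
`(x₁, x₂) ≈ (x₁ ∗ z, x₂ ∗ z)`. -/
def tensorStep (p q : X × X) : Prop :=
  ∃ z, q = (Q.op p.1 z, Q.op p.2 z)

/-- The equivalence relation `≈` defining the tensor product `X ⊗ X`:
the equivalence relation generated by `(x₁, x₂) ≈ (x₁ ∗ z, x₂ ∗ z)`. -/
def tensorEqv : X × X → X × X → Prop :=
  Relation.EqvGen Q.tensorStep

/-- The tensor product `X ⊗ X` of a quandle. -/
def Tensor : Type :=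
  Quotient (Relation.EqvGen.setoid Q.tensorStep)

/-- The symmetric double `D(X)` of a quandle, realized on `X × Bool`
(`(x, true)` is `x⁺` and `(x, false)` is `x⁻`), with
`x^ε ∗ y⁺ = (x∗y)^ε`, `x^ε ∗ y⁻ = (x∗̄y)^ε`, `x^ε ∗̄ y⁺ = (x∗̄y)^ε`,
`x^ε ∗̄ y⁻ = (x∗y)^ε`. -/
def double : QuandleStr (X × Bool) where
  op a b := (if b.2 then Q.op a.1 b.1 else Q.inv a.1 b.1, a.2)
  inv a b := (if b.2 then Q.inv a.1 b.1 else Q.op a.1 b.1, a.2)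
  q1 := by rintro ⟨x, ε⟩; cases ε <;> simp [Q.q1, Q.inv_self]
  q2a := by rintro ⟨x, ε⟩ ⟨y, δ⟩; cases δ <;> simp [Q.q2a, Q.q2b]
  q2b := by rintro ⟨x, ε⟩ ⟨y, δ⟩; cases δ <;> simp [Q.q2a, Q.q2b]
  q3 := by
    rintro ⟨x, ε⟩ ⟨y, δ⟩ ⟨z, γ⟩
    cases δ <;> cases γ
    · show (Q.inv (Q.inv x y) z, ε) = (Q.inv (Q.inv x z) (Q.inv y z), ε)
      rw [Q.distD]
    · show (Q.op (Q.inv x y) z, ε) = (Q.inv (Q.op x z) (Q.op y z), ε)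
      rw [Q.distB]
    · show (Q.inv (Q.op x y) z, ε) = (Q.op (Q.inv x z) (Q.inv y z), ε)
      rw [Q.distA]
    · show (Q.op (Q.op x y) z, ε) = (Q.op (Q.op x z) (Q.op y z), ε)
      rw [Q.q3]

/-- The equivalence relation generated by `≈` and the swap `τ`. -/
def tensorTauEqv : X × X → X × X → Prop :=
  Relation.EqvGen (fun p q => Q.tensorStep p q ∨ q = p.swap)

/-- The quotient `X ⊗ X / ⟨τ⟩`. -/
def TensorTau : Type :=
  Quotient (Relation.EqvGen.setoid (fun p q => Q.tensorStep p q ∨ q = p.swap))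

/-- The equivalence relation generated by `≈` and `(x₁, x₂) ↦ (ρ(x₁), ρ(x₂))`
for an involution `r` of `X`. -/
def tensorRhoEqv (r : X → X) : X × X → X × X → Prop :=
  Relation.EqvGen (fun p q => Q.tensorStep p q ∨ q = (r p.1, r p.2))

/-- The quotient `X ⊗ X / ⟨ρ⟩`. -/
def TensorRho (r : X → X) : Type :=
  Quotient (Relation.EqvGen.setoid (fun p q => Q.tensorStep p q ∨ q = (r p.1, r p.2)))

/-- The equivalence relation generated by `≈`, `τ` and `ρ`. -/
def tensorTauRhoEqv (r : X → X) : X × X → X × X → Prop :=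
  Relation.EqvGen (fun p q => Q.tensorStep p q ∨ q = p.swap ∨ q = (r p.1, r p.2))

/-- The quotient `X ⊗ X / ⟨τ, ρ⟩`. -/
def TensorTauRho (r : X → X) : Type :=
  Quotient (Relation.EqvGen.setoid
    (fun p q => Q.tensorStep p q ∨ q = p.swap ∨ q = (r p.1, r p.2)))

end QuandleStr

/-- The good involution `ρ` on the symmetric double `D(X) = X × Bool`,
exchanging `x⁺` and `x⁻`. -/
def doubleRho {X : Type} : X × Bool → X × Bool := fun a => (a.1, !a.2)

namespace QuandleStr

variable {X : Type} (Q : QuandleStr X)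

lemma tensorEqv_op (a : X × X) (z : X) :
    Q.tensorEqv a (Q.op a.1 z, Q.op a.2 z) :=
  Relation.EqvGen.rel _ _ ⟨z, rfl⟩

lemma tensorEqv_inv (a : X × X) (z : X) :
    Q.tensorEqv a (Q.inv a.1 z, Q.inv a.2 z) := by
  apply Relation.EqvGen.symm
  have := Q.tensorEqv_op (Q.inv a.1 z, Q.inv a.2 z) z
  simpa [Q.q2b, tensorEqv] using this

lemma double_forward (p q : (X × Bool) × (X × Bool))
    (h : (Q.double).tensorEqv p q) :
    p.1.2 = q.1.2 ∧ p.2.2 = q.2.2 ∧ Q.tensorEqv (p.1.1, p.2.1) (q.1.1, q.2.1) := by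
  induction h with
  | rel a b hab =>
    obtain ⟨⟨z, γ⟩, hz⟩ := hab
    subst hz
    cases γ
    · exact ⟨rfl, rfl, Q.tensorEqv_inv (a.1.1, a.2.1) z⟩
    · exact ⟨rfl, rfl, Q.tensorEqv_op (a.1.1, a.2.1) z⟩
  | refl a => exact ⟨rfl, rfl, Relation.EqvGen.refl _⟩
  | symm a b _ ih => exact ⟨ih.1.symm, ih.2.1.symm, Relation.EqvGen.symm _ _ ih.2.2⟩
  | trans a b c _ _ ih1 ih2 =>
    exact ⟨ih1.1.trans ih2.1, ih1.2.1.trans ih2.2.1,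
      Relation.EqvGen.trans _ _ _ ih1.2.2 ih2.2.2⟩

lemma double_backward (ε δ : Bool) (p q : X × X) (h : Q.tensorEqv p q) :
    (Q.double).tensorEqv ((p.1, ε), (p.2, δ)) ((q.1, ε), (q.2, δ)) := by
  induction h with
  | rel a b hab =>
    obtain ⟨z, hz⟩ := hab
    subst hz
    exact Relation.EqvGen.rel _ _ ⟨(z, true), rfl⟩
  | refl a => exact Relation.EqvGen.refl _
  | symm a b _ ih => exact Relation.EqvGen.symm _ _ ih
  | trans a b c _ _ ih1 ih2 => exact Relation.EqvGen.trans _ _ _ ih1 ih2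

end QuandleStr

/-- if `E` is the `≈`-equivalence class of `(x₀, y₀)` in `X × X`, then
for any `ε, δ` the equivalence class of `(x₀^ε, y₀^δ)` in `D(X) × D(X)` equals
`E^{ε,δ} = {(x^ε, y^δ) : (x, y) ∈ E}`. -/
theorem statement2 {X : Type} (Q : QuandleStr X) (x₀ y₀ : X) (ε δ : Bool) :
    {q | (Q.double).tensorEqv ((x₀, ε), (y₀, δ)) q} =
      {q | ∃ x y, (x, y) ∈ {p : X × X | Q.tensorEqv (x₀, y₀) p} ∧
        q = ((x, ε), (y, δ))} := by
  ext q
  simp only [Set.mem_setOf_eq]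
  constructor
  · intro h
    obtain ⟨h1, h2, h3⟩ := Q.double_forward _ _ h
    refine ⟨q.1.1, q.2.1, h3, ?_⟩
    obtain ⟨⟨a, b⟩, c, d⟩ := q
    simp_all
  · rintro ⟨x, y, hxy, rfl⟩
    exact Q.double_backward ε δ (x₀, y₀) (x, y) hxy
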